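/- Let φ : [0, b₁] → ℝ be strictly concave, decreasing, continuous with φ(0) = b₂, φ(b₁) = 0, and C¹ on (0, b₁). Fix (r₁, r₂) on the graph of φ with 0 < r₁ < b₁, and set s = -r₁φ'(r₁)/(r₂ - r₁φ'(r₁)). Then for any (w₁, w₂) in the closed region {(x, y) : 0 ≤ x ≤ b₁, 0 ≤ y ≤ φ(x)} with (w₁, w₂) ≠ (r₁, r₂), one has (s/r₁)·w₁ + ((1-s)/r₂)·w₂ < 1. -/

import Mathlib

open Set

/-- The strict supporting-line inequality (Lemma 2.9): for a point `(r₁,r₂)`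
on the strictly concave profile curve and any other point `(w₁,w₂)` of the
closed region under the curve, `(s/r₁)w₁ + ((1-s)/r₂)w₂ < 1`. -/
theorem supporting_line_inequality
    (b₁ b₂ : ℝ) (hb₁ : 0 < b₁) (hb₂ : 0 < b₂)
    (φ φ' : ℝ → ℝ)
    (hconc : StrictConcaveOn ℝ (Icc 0 b₁) φ)
    (hanti : StrictAntiOn φ (Icc 0 b₁))
    (hcont : ContinuousOn φ (Icc 0 b₁))
    (hφ0 : φ 0 = b₂) (hφb₁ : φ b₁ = 0)
    (hderiv : ∀ x ∈ Ioo 0 b₁, HasDerivAt φ (φ' x) x)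
    (r₁ : ℝ) (hr₁ : r₁ ∈ Ioo 0 b₁)
    (r₂ s : ℝ) (hr₂ : r₂ = φ r₁)
    (hs : s = -r₁ * φ' r₁ / (r₂ - r₁ * φ' r₁))
    (w₁ w₂ : ℝ)
    (hw₁ : 0 ≤ w₁) (hw₁' : w₁ ≤ b₁) (hw₂ : 0 ≤ w₂) (hw₂' : w₂ ≤ φ w₁)
    (hne : (w₁, w₂) ≠ (r₁, r₂)) :
    s / r₁ * w₁ + (1 - s) / r₂ * w₂ < 1 := by
  obtain ⟨hr₁0, hr₁b⟩ := hr₁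
  have hr₁I : r₁ ∈ Icc 0 b₁ := ⟨hr₁0.le, hr₁b.le⟩
  have h0I : (0:ℝ) ∈ Icc 0 b₁ := ⟨le_refl 0, hb₁.le⟩
  have hb₁I : b₁ ∈ Icc 0 b₁ := ⟨hb₁.le, le_refl b₁⟩
  have hwI : w₁ ∈ Icc 0 b₁ := ⟨hw₁, hw₁'⟩
  have hd : HasDerivAt φ (φ' r₁) r₁ := hderiv r₁ ⟨hr₁0, hr₁b⟩
  set d := φ' r₁ with hdd
  -- r₂ > 0
  have hr₂pos : 0 < r₂ := by
    have := hanti hr₁I hb₁I hr₁b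
    rw [hφb₁] at this; linarith [hr₂ ▸ this]
  -- d < 0
  have hdneg : d < 0 := by
    have hslope : d < slope φ 0 r₁ := hconc.lt_slope_of_hasDerivAt h0I hr₁I hr₁0 hd
    have hval : φ r₁ < φ 0 := hanti h0I hr₁I hr₁0
    rw [slope_def_field] at hslope
    have : (φ r₁ - φ 0) / (r₁ - 0) < 0 := by
      apply div_neg_of_neg_of_pos <;> linarith
    linarith
  have hD : 0 < r₂ - r₁ * d := by nlinarith
  -- key pointwise inequality: w₂ < r₂ + d * (w₁ - r₁)
  have hkey : w₂ < r₂ + d * (w₁ - r₁) := by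
    rcases lt_trichotomy w₁ r₁ with h | h | h
    · have hslope : d < slope φ w₁ r₁ := hconc.lt_slope_of_hasDerivAt hwI hr₁I h hd
      rw [slope_def_field] at hslope
      have h1 : d * (r₁ - w₁) < φ r₁ - φ w₁ := by
        have := (lt_div_iff₀ (by linarith : (0:ℝ) < r₁ - w₁)).mp hslope
        linarith
      rw [hr₂]; nlinarith
    · subst h
      have hw₂r : w₂ ≠ r₂ := fun he => hne (by rw [he])
      have : w₂ ≤ r₂ := hr₂ ▸ hw₂'
      have : w₂ < r₂ := lt_of_le_of_ne this hw₂r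
      simpa using this
    · have hslope : slope φ r₁ w₁ < d := hconc.slope_lt_of_hasDerivAt hr₁I hwI h hd
      rw [slope_def_field] at hslope
      have h1 : φ w₁ - φ r₁ < d * (w₁ - r₁) := by
        have := (div_lt_iff₀ (by linarith : (0:ℝ) < w₁ - r₁)).mp hslope
        linarith
      rw [hr₂]; linarith
  -- algebra
  have hne₁ : r₁ ≠ 0 := ne_of_gt hr₁0
  have hne₂ : r₂ ≠ 0 := ne_of_gt hr₂pos
  have hneD : r₂ - r₁ * d ≠ 0 := ne_of_gt hD
  have hs1 : s / r₁ = -d / (r₂ - r₁ * d) := by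
    rw [hs]; field_simp
  have hs2 : (1 - s) / r₂ = 1 / (r₂ - r₁ * d) := by
    rw [hs]; field_simp; ring
  rw [hs1, hs2]
  rw [div_mul_eq_mul_div, div_mul_eq_mul_div, ← add_div, div_lt_one hD]
  nlinarith
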